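/- Let Ω = (0,1)×(0,1) and let w ∈ L²(Ω) with w not equal to 0 (as an element of L²). Then there exists an integer n such that limsup_{r → +∞} (ln |G(w)(r, nπ)|) / r ≥ −1, where the limsup is taken over real r → +∞. -/

import Mathlib

open MeasureTheory Real Set Filter

/-- The open unit square `Ω = (0,1) × (0,1)`. -/
def unitSq : Set (ℝ × ℝ) := (Set.Ioo (0:ℝ) 1) ×ˢ (Set.Ioo (0:ℝ) 1)

/-- `G(w)(z, nπ) = ∫_Ω w(x,y) cosh(zx) cos(nπy) dx dy`. -/
noncomputable def Gfun (w : ℝ × ℝ → ℝ) (n : ℤ) (z : ℂ) : ℂ :=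
  ∫ p in unitSq, (w p : ℂ) * Complex.cosh (z * (p.1 : ℂ)) *
      Complex.cos ((n : ℂ) * (Real.pi : ℂ) * (p.2 : ℂ))

local notation "μ" => MeasureTheory.volume.restrict unitSq

lemma unitSq_measurable : MeasurableSet unitSq :=
  measurableSet_Ioo.prod measurableSet_Ioo

instance : IsFiniteMeasure μ := by
  constructor
  rw [Measure.restrict_apply_univ]
  have h : unitSq ⊆ Set.Icc ((0:ℝ),(0:ℝ)) ((1:ℝ),(1:ℝ)) := by
    rw [Set.Icc_prod_eq]
    exact Set.prod_mono Set.Ioo_subset_Icc_self Set.Ioo_subset_Icc_self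
  exact lt_of_le_of_lt (measure_mono h) isCompact_Icc.measure_lt_top

lemma ae_mem_unitSq : ∀ᵐ p ∂μ, p ∈ unitSq :=
  ae_restrict_mem unitSq_measurable

noncomputable def coefC (w : ℝ × ℝ → ℝ) (n : ℤ) (m : ℕ) : ℂ :=
  ∫ p in unitSq, (w p : ℂ) * (p.1 : ℂ) ^ m *
    Complex.cos ((n : ℂ) * (Real.pi : ℂ) * (p.2 : ℂ))

lemma hasSum_cosh (ζ : ℂ) :
    HasSum (fun m : ℕ => if Even m then ζ ^ m / (Nat.factorial m : ℂ) else 0) (Complex.cosh ζ) := by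
  have h1 : HasSum (fun n : ℕ => ζ ^ n / (Nat.factorial n : ℂ)) (Complex.exp ζ) := by
    rw [Complex.exp_eq_exp_ℂ]
    exact NormedSpace.expSeries_div_hasSum_exp ζ
  have h2 : HasSum (fun n : ℕ => (-ζ) ^ n / (Nat.factorial n : ℂ)) (Complex.exp (-ζ)) := by
    rw [Complex.exp_eq_exp_ℂ]
    exact NormedSpace.expSeries_div_hasSum_exp (-ζ)
  have h3 := (h1.add h2).div_const 2
  rw [Complex.cosh]
  refine h3.congr_fun fun m => ?_
  rcases Nat.even_or_odd m with he | ho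
  · rw [if_pos he, he.neg_pow]
    have : (Nat.factorial m : ℂ) ≠ 0 := Nat.cast_ne_zero.2 (Nat.factorial_ne_zero m)
    field_simp
    ring
  · rw [if_neg (Nat.not_even_iff_odd.2 ho), ho.neg_pow]
    ring

lemma cos_eq_ofReal (n : ℤ) (y : ℝ) :
    Complex.cos ((n : ℂ) * (Real.pi : ℂ) * (y : ℂ)) = ((Real.cos ((n : ℝ) * Real.pi * y) : ℝ) : ℂ) := by
  rw [Complex.ofReal_cos]
  norm_num

lemma abs_cos_le (n : ℤ) (y : ℝ) :
    ‖Complex.cos ((n : ℂ) * (Real.pi : ℂ) * (y : ℂ))‖ ≤ 1 := by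
  rw [cos_eq_ofReal, Complex.norm_real, Real.norm_eq_abs]
  exact Real.abs_cos_le_one _

lemma integrand_bound (w : ℝ × ℝ → ℝ) (n : ℤ) (m : ℕ) {p : ℝ × ℝ} (hp : p ∈ unitSq) :
    ‖(w p : ℂ) * (p.1 : ℂ) ^ m * Complex.cos ((n : ℂ) * (Real.pi : ℂ) * (p.2 : ℂ))‖ ≤ ‖w p‖ := by
  obtain ⟨⟨hx0, hx1⟩, -⟩ := hp
  rw [norm_mul, norm_mul]
  have h1 : ‖(p.1 : ℂ) ^ m‖ ≤ 1 := by
    rw [norm_pow, Complex.norm_real, Real.norm_eq_abs, abs_of_pos hx0]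
    exact pow_le_one₀ hx0.le hx1.le
  have h2 := abs_cos_le n p.2
  have h0 : ‖(w p : ℂ)‖ = ‖w p‖ := Complex.norm_real _
  calc ‖(w p : ℂ)‖ * ‖(p.1:ℂ) ^ m‖ * ‖Complex.cos ((n : ℂ) * (Real.pi : ℂ) * (p.2 : ℂ))‖
      ≤ ‖(w p : ℂ)‖ * 1 * 1 := by gcongr
    _ = ‖w p‖ := by rw [h0]; ring

lemma base_integrable (w : ℝ × ℝ → ℝ) (n : ℤ) (hInt : Integrable w μ) (m : ℕ) :
    Integrable (fun p => (w p : ℂ) * (p.1 : ℂ) ^ m *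
      Complex.cos ((n : ℂ) * (Real.pi : ℂ) * (p.2 : ℂ))) μ := by
  refine Integrable.mono' hInt.norm ?_ ?_
  · exact (Complex.continuous_ofReal.comp_aestronglyMeasurable hInt.1).mul
      ((Continuous.aestronglyMeasurable (by continuity))) |>.mul
      ((Continuous.aestronglyMeasurable (by continuity)))
  · filter_upwards [ae_mem_unitSq] with p hp
    exact integrand_bound w n m hp

lemma norm_coefC_le (w : ℝ × ℝ → ℝ) (n : ℤ) (hInt : Integrable w μ) (m : ℕ) :
    ‖coefC w n m‖ ≤ ∫ p, ‖w p‖ ∂μ := by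
  refine norm_integral_le_of_norm_le hInt.norm ?_
  filter_upwards [ae_mem_unitSq] with p hp
  exact integrand_bound w n m hp

lemma hasSum_Gfun (w : ℝ × ℝ → ℝ) (n : ℤ) (hInt : Integrable w μ) (z : ℂ) :
    HasSum (fun m : ℕ => (if Even m then coefC w n m / (Nat.factorial m : ℂ) else 0) * z ^ m)
      (Gfun w n z) := by
  set c : ℕ → ℂ := fun m => if Even m then z ^ m / (Nat.factorial m : ℂ) else 0 with hc
  set base : ℕ → (ℝ × ℝ) → ℂ := fun m p => (w p : ℂ) * (p.1 : ℂ) ^ m *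
      Complex.cos ((n : ℂ) * (Real.pi : ℂ) * (p.2 : ℂ)) with hbase
  set g : ℕ → (ℝ × ℝ) → ℂ := fun m p => c m * base m p with hg
  have hgm : ∀ m, Integrable (g m) μ := fun m => (base_integrable w n hInt m).const_mul _
  have W0 : 0 ≤ ∫ p, ‖w p‖ ∂μ := integral_nonneg fun p => norm_nonneg _
  have hnorm : ∀ m, ∫ p, ‖g m p‖ ∂μ ≤ ‖c m‖ * ∫ p, ‖w p‖ ∂μ := by
    intro m
    have : ∀ p, ‖g m p‖ = ‖c m‖ * ‖base m p‖ := fun p => norm_mul _ _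
    rw [show (fun p => ‖g m p‖) = fun p => ‖c m‖ * ‖base m p‖ from funext this] at *
    rw [integral_const_mul]
    refine mul_le_mul_of_nonneg_left ?_ (norm_nonneg _)
    refine integral_mono_ae (base_integrable w n hInt m).norm hInt.norm ?_
    filter_upwards [ae_mem_unitSq] with p hp
    exact integrand_bound w n m hp
  have hcle : ∀ m, ‖c m‖ ≤ ‖z‖ ^ m / (Nat.factorial m : ℝ) := by
    intro m
    simp only [hc]
    split_ifs with h
    · rw [norm_div, norm_pow, Complex.norm_natCast]
    · simp only [norm_zero]
      positivity
  have hsum : Summable fun m => ∫ p, ‖g m p‖ ∂μ := by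
    refine Summable.of_nonneg_of_le (fun m => integral_nonneg fun p => norm_nonneg _)
      (fun m => le_trans (hnorm m) ?_)
      (((Real.summable_pow_div_factorial ‖z‖)).mul_right (∫ p, ‖w p‖ ∂μ))
    exact mul_le_mul_of_nonneg_right (hcle m) W0
  have key := MeasureTheory.hasSum_integral_of_summable_integral_norm hgm hsum
  have hpt : ∀ p : ℝ × ℝ, HasSum (fun m => g m p)
      ((w p : ℂ) * Complex.cosh (z * (p.1 : ℂ)) *
        Complex.cos ((n : ℂ) * (Real.pi : ℂ) * (p.2 : ℂ))) := by
    intro p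
    have h := (hasSum_cosh (z * (p.1 : ℂ))).mul_left
      ((w p : ℂ) * Complex.cos ((n : ℂ) * (Real.pi : ℂ) * (p.2 : ℂ)))
    have hval : (w p : ℂ) * Complex.cos ((n : ℂ) * (Real.pi : ℂ) * (p.2 : ℂ)) *
        Complex.cosh (z * (p.1 : ℂ)) =
        (w p : ℂ) * Complex.cosh (z * (p.1 : ℂ)) *
        Complex.cos ((n : ℂ) * (Real.pi : ℂ) * (p.2 : ℂ)) := by ring
    rw [hval] at h
    refine h.congr_fun fun m => ?_
    simp only [hg, hbase, hc]
    split_ifs with he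
    · rw [mul_pow]; ring
    · simp
  have htot : (∫ p, (∑' m, g m p) ∂μ) = Gfun w n z := by
    rw [Gfun]
    refine integral_congr_ae (Eventually.of_forall fun p => ?_)
    exact (hpt p).tsum_eq
  rw [htot] at key
  refine key.congr_fun fun m => ?_
  have hint : ∫ p, g m p ∂μ = c m * coefC w n m := by
    simp only [hg, coefC]
    exact integral_const_mul _ _
  rw [hint]
  simp only [hc]
  split_ifs with he
  · ring
  · simp

noncomputable def Gser (w : ℝ × ℝ → ℝ) (n : ℤ) : FormalMultilinearSeries ℂ ℂ ℂ :=
  fun m => ContinuousMultilinearMap.mkPiRing ℂ (Fin m)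
    (if Even m then coefC w n m / (Nat.factorial m : ℂ) else 0)

lemma Gser_apply (w : ℝ × ℝ → ℝ) (n : ℤ) (m : ℕ) (z : ℂ) :
    (Gser w n m) (fun _ => z) =
      (if Even m then coefC w n m / (Nat.factorial m : ℂ) else 0) * z ^ m := by
  rw [Gser, ContinuousMultilinearMap.mkPiRing_apply]
  simp [smul_eq_mul, mul_comm]

lemma Gser_radius (w : ℝ × ℝ → ℝ) (n : ℤ) (hInt : Integrable w μ) :
    (Gser w n).radius = ⊤ := by
  apply FormalMultilinearSeries.radius_eq_top_of_summable_norm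
  intro r
  set W := ∫ p, ‖w p‖ ∂μ with hW
  have W0 : 0 ≤ W := integral_nonneg fun p => norm_nonneg _
  refine Summable.of_nonneg_of_le (fun m => by positivity) (fun m => ?_)
    (((Real.summable_pow_div_factorial r)).mul_left W)
  have hnorm : ‖Gser w n m‖ = ‖if Even m then coefC w n m / (Nat.factorial m : ℂ) else 0‖ :=
    ContinuousMultilinearMap.norm_mkPiRing _
  rw [hnorm]
  have hle : ‖if Even m then coefC w n m / (Nat.factorial m : ℂ) else 0‖ ≤ W / (Nat.factorial m : ℝ) := by
    split_ifs with h
    · rw [norm_div, Complex.norm_natCast]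
      gcongr
      exact norm_coefC_le w n hInt m
    · simp only [norm_zero]
      positivity
  calc ‖if Even m then coefC w n m / (Nat.factorial m : ℂ) else 0‖ * (r:ℝ) ^ m
      ≤ (W / (Nat.factorial m : ℝ)) * (r:ℝ) ^ m := by
        exact mul_le_mul_of_nonneg_right hle (by positivity)
    _ = W * ((r:ℝ) ^ m / (Nat.factorial m : ℝ)) := by ring

lemma Gfun_hasFPowerSeries (w : ℝ × ℝ → ℝ) (n : ℤ) (hInt : Integrable w μ) :
    HasFPowerSeriesOnBall (Gfun w n) (Gser w n) 0 ⊤ := by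
  have h0 : 0 < (Gser w n).radius := by
    rw [Gser_radius w n hInt]; exact ENNReal.zero_lt_top
  have hball := (Gser w n).hasFPowerSeriesOnBall h0
  rw [Gser_radius w n hInt] at hball
  refine hball.congr ?_
  intro z hz
  have h1 := hasSum_Gfun w n hInt z
  have h2 : (Gser w n).sum z = ∑' m, (Gser w n m) (fun _ => z) := rfl
  rw [h2]
  rw [show (fun m : ℕ => (Gser w n m) (fun _ => z)) = fun m : ℕ =>
    (if Even m then coefC w n m / (Nat.factorial m : ℂ) else 0) * z ^ m from
    funext fun m => Gser_apply w n m z]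
  exact h1.tsum_eq

lemma Gfun_differentiable (w : ℝ × ℝ → ℝ) (n : ℤ) (hInt : Integrable w μ) :
    Differentiable ℂ (Gfun w n) := by
  have h := (Gfun_hasFPowerSeries w n hInt).differentiableOn
  have hb : Metric.eball (0 : ℂ) ⊤ = Set.univ := by
    ext z; simp [Metric.mem_eball, edist_lt_top]
  rw [hb] at h
  rw [← differentiableOn_univ]
  exact h

lemma Gfun_even (w : ℝ × ℝ → ℝ) (n : ℤ) (hInt : Integrable w μ) (z : ℂ) :
    Gfun w n (-z) = Gfun w n z := by
  have h1 := hasSum_Gfun w n hInt z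
  have h2 := hasSum_Gfun w n hInt (-z)
  refine HasSum.unique (h2.congr_fun fun m => ?_) h1
  rcases Nat.even_or_odd m with he | ho
  · rw [he.neg_pow]
  · rw [if_neg (Nat.not_even_iff_odd.2 ho), zero_mul, zero_mul]

lemma coefC_eq_zero (w : ℝ × ℝ → ℝ) (n : ℤ) (hInt : Integrable w μ)
    (h : Gfun w n = 0) (m : ℕ) (hm : Even m) : coefC w n m = 0 := by
  have h1 : HasFPowerSeriesAt (0 : ℂ → ℂ) (Gser w n) 0 := by
    have := (Gfun_hasFPowerSeries w n hInt).hasFPowerSeriesAt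
    rwa [h] at this
  have h2 : Gser w n = 0 := h1.eq_zero
  have h3 : (Gser w n m) (fun _ => (1:ℂ)) = 0 := by rw [h2]; rfl
  rw [Gser_apply] at h3
  rw [if_pos hm, one_pow, mul_one] at h3
  have hne : (Nat.factorial m : ℂ) ≠ 0 := Nat.cast_ne_zero.2 (Nat.factorial_ne_zero m)
  field_simp at h3
  simpa using h3

lemma norm_cosh_le (ζ : ℂ) : ‖Complex.cosh ζ‖ ≤ Real.exp (‖ζ‖) := by
  rw [Complex.cosh]
  have h1 : ‖Complex.exp ζ‖ ≤ Real.exp (‖ζ‖) := by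
    rw [Complex.norm_exp]
    exact Real.exp_le_exp.2 ((le_abs_self _).trans (Complex.abs_re_le_norm ζ))
  have h2 : ‖Complex.exp (-ζ)‖ ≤ Real.exp (‖ζ‖) := by
    rw [Complex.norm_exp]
    refine Real.exp_le_exp.2 ?_
    have := Complex.abs_re_le_norm ζ
    simp only [Complex.neg_re]
    cases abs_le.1 this; linarith
  calc ‖(Complex.exp ζ + Complex.exp (-ζ)) / 2‖ ≤ (‖Complex.exp ζ‖ + ‖Complex.exp (-ζ)‖) / 2 := by
        rw [norm_div]
        gcongr
        · exact norm_add_le _ _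
        · simp
    _ ≤ Real.exp (‖ζ‖) := by linarith

lemma norm_cosh_mul_le {z : ℂ} {x : ℝ} (hx0 : 0 ≤ x) (hx1 : x ≤ 1) :
    ‖Complex.cosh (z * (x : ℂ))‖ ≤ Real.exp (‖z‖) := by
  refine (norm_cosh_le _).trans (Real.exp_le_exp.2 ?_)
  rw [norm_mul, Complex.norm_real, Real.norm_eq_abs, abs_of_nonneg hx0]
  calc ‖z‖ * x ≤ ‖z‖ * 1 := by gcongr
    _ = ‖z‖ := mul_one _

lemma Gfun_norm_le (w : ℝ × ℝ → ℝ) (n : ℤ) (hInt : Integrable w μ) (z : ℂ) :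
    ‖Gfun w n z‖ ≤ (∫ p, ‖w p‖ ∂μ) * Real.exp (‖z‖) := by
  rw [show (∫ p, ‖w p‖ ∂μ) * Real.exp (‖z‖)
      = ∫ p, ‖w p‖ * Real.exp (‖z‖) ∂μ from (integral_mul_const _ _).symm]
  refine norm_integral_le_of_norm_le (hInt.norm.mul_const _) ?_
  filter_upwards [ae_mem_unitSq] with p hp
  obtain ⟨⟨hx0, hx1⟩, -⟩ := hp
  rw [norm_mul, norm_mul]
  calc ‖(w p : ℂ)‖ * ‖Complex.cosh (z * (p.1:ℂ))‖ * ‖Complex.cos ((n:ℂ) * (Real.pi:ℂ) * (p.2:ℂ))‖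
      ≤ ‖(w p : ℂ)‖ * Real.exp (‖z‖) * 1 := by
        gcongr
        · exact norm_cosh_mul_le hx0.le hx1.le
        · exact abs_cos_le n p.2
    _ = ‖w p‖ * Real.exp (‖z‖) := by rw [Complex.norm_real]; ring

lemma Gfun_im_le (w : ℝ × ℝ → ℝ) (n : ℤ) (hInt : Integrable w μ) (y : ℝ) :
    ‖Gfun w n ((y : ℂ) * Complex.I)‖ ≤ ∫ p, ‖w p‖ ∂μ := by
  refine norm_integral_le_of_norm_le hInt.norm ?_
  filter_upwards [ae_mem_unitSq] with p hp
  obtain ⟨⟨hx0, hx1⟩, -⟩ := hp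
  have hc : (y : ℂ) * Complex.I * (p.1 : ℂ) = ((y * p.1 : ℝ) : ℂ) * Complex.I := by
    push_cast; ring
  rw [norm_mul, norm_mul, hc, Complex.cosh_mul_I]
  have h1 : ‖Complex.cos ((y * p.1 : ℝ) : ℂ)‖ ≤ 1 := by
    rw [← Complex.ofReal_cos, Complex.norm_real, Real.norm_eq_abs]
    exact Real.abs_cos_le_one _
  have h2 := abs_cos_le n p.2
  calc ‖(w p : ℂ)‖ * ‖Complex.cos ((y * p.1 : ℝ) : ℂ)‖ * ‖Complex.cos ((n:ℂ) * (Real.pi:ℂ) * (p.2:ℂ))‖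
      ≤ ‖(w p : ℂ)‖ * 1 * 1 := by gcongr
    _ = ‖w p‖ := by rw [Complex.norm_real]; ring

lemma Gfun_eq_zero_of_decay (w : ℝ × ℝ → ℝ) (n : ℤ) (hInt : Integrable w μ)
    (hdecay : ∀ᶠ r : ℝ in atTop, ‖Gfun w n (r : ℂ)‖ ≤ Real.exp (-r)) :
    Gfun w n = 0 := by
  obtain ⟨r₁, hr₁⟩ := Filter.eventually_atTop.1 hdecay
  set r₀ : ℝ := max r₁ 0 with hr₀
  set W := ∫ p, ‖w p‖ ∂μ with hW
  have W0 : 0 ≤ W := integral_nonneg fun p => norm_nonneg _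
  have hGd := Gfun_differentiable w n hInt
  -- bound on the compact piece of the real axis
  have hcont : ContinuousOn (fun x : ℝ => Real.exp x * ‖Gfun w n (x : ℂ)‖) (Set.Icc 0 r₀) := by
    apply Continuous.continuousOn
    exact (Real.continuous_exp).mul
      ((hGd.continuous.comp Complex.continuous_ofReal).norm)
  obtain ⟨M, hM⟩ := isCompact_Icc.exists_bound_of_continuousOn hcont
  set C : ℝ := max 1 (max W M) with hC
  have hC1 : (1:ℝ) ≤ C := le_max_left _ _
  have hCW : W ≤ C := (le_max_left _ _).trans (le_max_right _ _)
  have hCM : M ≤ C := (le_max_right _ _).trans (le_max_right _ _)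
  set F : ℂ → ℂ := fun z => Complex.exp z * Gfun w n z with hF
  have hFd : Differentiable ℂ F := Complex.differentiable_exp.mul hGd
  have hFnorm : ∀ z : ℂ, ‖F z‖ = Real.exp z.re * ‖Gfun w n z‖ := by
    intro z
    simp only [hF, norm_mul, Complex.norm_exp]
  have hFre : ∀ x : ℝ, 0 ≤ x → ‖F (x : ℂ)‖ ≤ C := by
    intro x hx
    rw [hFnorm, Complex.ofReal_re]
    rcases le_total x r₀ with h | h
    · have := hM x ⟨hx, h⟩
      rw [Real.norm_eq_abs] at this
      exact (le_abs_self _).trans (this.trans hCM)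
    · have hx1 : r₁ ≤ x := le_trans (le_max_left _ _) h
      have := hr₁ x hx1
      calc Real.exp x * ‖Gfun w n (x:ℂ)‖ ≤ Real.exp x * Real.exp (-x) := by gcongr
        _ = 1 := by rw [← Real.exp_add]; simp
        _ ≤ C := hC1
  have hFim : ∀ y : ℝ, ‖F ((y : ℂ) * Complex.I)‖ ≤ C := by
    intro y
    rw [hFnorm]
    have : ((y:ℂ) * Complex.I).re = 0 := by simp
    rw [this, Real.exp_zero, one_mul]
    exact (Gfun_im_le w n hInt y).trans hCW
  have hO : ∀ s : Set ℂ, F =O[Bornology.cobounded ℂ ⊓ Filter.principal s]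
      fun z => Real.exp (2 * ‖z‖ ^ (1:ℝ)) := by
    intro s
    refine Asymptotics.IsBigO.of_bound W ?_
    refine Filter.Eventually.of_forall fun z => ?_
    rw [hFnorm]
    have hb := Gfun_norm_le w n hInt z
    have h1 : Real.exp z.re ≤ Real.exp (‖z‖) :=
      Real.exp_le_exp.2 ((le_abs_self _).trans (Complex.abs_re_le_norm z))
    have h2 : ‖Real.exp (2 * ‖z‖ ^ (1:ℝ))‖ = Real.exp (2 * ‖z‖) := by
      rw [Real.norm_eq_abs, Real.abs_exp, Real.rpow_one]
    rw [h2]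
    calc Real.exp z.re * ‖Gfun w n z‖
        ≤ Real.exp (‖z‖) * (W * Real.exp (‖z‖)) := by
          exact mul_le_mul h1 hb (norm_nonneg _) (Real.exp_pos _).le
      _ = W * (Real.exp (‖z‖) * Real.exp (‖z‖)) := by ring
      _ = W * Real.exp (‖z‖ + ‖z‖) := by rw [Real.exp_add]
      _ = W * Real.exp (2 * ‖z‖) := by rw [two_mul]
  have hB : ∃ c < (2:ℝ), ∃ B, ∀ s : Set ℂ, F =O[Bornology.cobounded ℂ ⊓ Filter.principal s]
      fun z => Real.exp (B * ‖z‖ ^ c) := ⟨1, one_lt_two, 2, hO⟩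
  have hRHP : ∀ z : ℂ, 0 ≤ z.re → ‖F z‖ ≤ C := by
    intro z hz
    rcases le_total 0 z.im with him0 | him0
    · exact PhragmenLindelof.quadrant_I hFd.diffContOnCl ⟨1, one_lt_two, 2, hO _⟩
        hFre (fun x _ => hFim x) hz him0
    · exact PhragmenLindelof.quadrant_IV hFd.diffContOnCl ⟨1, one_lt_two, 2, hO _⟩
        hFre (fun x _ => hFim x) hz him0
  have hale : ∀ z : ℂ, 0 ≤ z.re → ‖Gfun w n z‖ ≤ C := by
    intro z hz
    have h1 : 1 ≤ Real.exp z.re := Real.one_le_exp hz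
    have h2 := hRHP z hz
    rw [hFnorm] at h2
    nlinarith [norm_nonneg (Gfun w n z)]
  have hall : ∀ z : ℂ, ‖Gfun w n z‖ ≤ C := by
    intro z
    rcases le_total 0 z.re with hz | hz
    · exact hale z hz
    · have h := hale (-z) (by simp; linarith)
      rwa [Gfun_even w n hInt z] at h
  have hbdd : Bornology.IsBounded (Set.range (Gfun w n)) := by
    refine isBounded_iff_forall_norm_le.2 ⟨C, ?_⟩
    rintro x ⟨z, rfl⟩
    exact hall z
  funext z
  have hconst := hGd.apply_eq_apply_of_bounded hbdd
  have hten : Tendsto (fun r : ℝ => Real.exp (-r)) atTop (nhds 0) :=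
    Real.tendsto_exp_neg_atTop_nhds_zero
  have hev : ∀ᶠ r : ℝ in atTop, ‖Gfun w n z‖ ≤ Real.exp (-r) := by
    filter_upwards [hdecay] with r hr
    rw [hconst z (r:ℂ)]
    exact hr
  have hle0 : ‖Gfun w n z‖ ≤ 0 := ge_of_tendsto hten hev
  simpa using norm_le_zero_iff.1 hle0

/-- generator functions -/
noncomputable def gen (j : ℕ) (k : ℤ) : ℝ × ℝ → ℝ :=
  fun p => p.1 ^ (2*j) * Real.cos ((k : ℝ) * Real.pi * p.2)

noncomputable def SpanS : Submodule ℝ (ℝ × ℝ → ℝ) :=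
  Submodule.span ℝ {f | ∃ (j : ℕ) (k : ℤ), f = gen j k}

lemma gen_mem (j : ℕ) (k : ℤ) : gen j k ∈ SpanS :=
  Submodule.subset_span ⟨j, k, rfl⟩

lemma gen_mul (j i : ℕ) (k l : ℤ) :
    (fun p => gen j k p * gen i l p) =
      (1/2 : ℝ) • gen (j+i) (k+l) + (1/2 : ℝ) • gen (j+i) (k-l) := by
  funext p
  simp only [gen, Pi.add_apply, Pi.smul_apply, smul_eq_mul]
  have hkl : ((k + l : ℤ) : ℝ) * Real.pi * p.2
      = (k : ℝ) * Real.pi * p.2 + (l : ℝ) * Real.pi * p.2 := by push_cast; ring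
  have hkl' : ((k - l : ℤ) : ℝ) * Real.pi * p.2
      = (k : ℝ) * Real.pi * p.2 - (l : ℝ) * Real.pi * p.2 := by push_cast; ring
  rw [hkl, hkl', Real.cos_add, Real.cos_sub]
  ring

lemma mul_mem_spanS {f g : ℝ × ℝ → ℝ} (hf : f ∈ SpanS) (hg : g ∈ SpanS) :
    (fun p => f p * g p) ∈ SpanS := by
  induction hf using Submodule.span_induction with
  | mem f hfmem =>
    obtain ⟨j, k, rfl⟩ := hfmem
    induction hg using Submodule.span_induction with
    | mem g hgmem =>
      obtain ⟨i, l, rfl⟩ := hgmem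
      rw [gen_mul]
      exact Submodule.add_mem _ (Submodule.smul_mem _ _ (gen_mem _ _))
        (Submodule.smul_mem _ _ (gen_mem _ _))
    | zero =>
      have : (fun p => gen j k p * (0 : ℝ × ℝ → ℝ) p) = (0 : ℝ × ℝ → ℝ) := by
        funext p; simp
      rw [this]; exact Submodule.zero_mem _
    | add g₁ g₂ hg₁ hg₂ ih₁ ih₂ =>
      have : (fun p => gen j k p * (g₁ + g₂) p)
          = (fun p => gen j k p * g₁ p) + fun p => gen j k p * g₂ p := by
        funext p; simp [mul_add]
      rw [this]; exact Submodule.add_mem _ ih₁ ih₂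
    | smul a g₁ hg₁ ih =>
      have : (fun p => gen j k p * (a • g₁) p) = a • fun p => gen j k p * g₁ p := by
        funext p; simp [Pi.smul_apply, smul_eq_mul]; ring
      rw [this]; exact Submodule.smul_mem _ _ ih
  | zero =>
    have : (fun p => (0 : ℝ × ℝ → ℝ) p * g p) = (0 : ℝ × ℝ → ℝ) := by
      funext p; simp
    rw [this]; exact Submodule.zero_mem _
  | add f₁ f₂ hf₁ hf₂ ih₁ ih₂ =>
    have : (fun p => (f₁ + f₂) p * g p)
        = (fun p => f₁ p * g p) + fun p => f₂ p * g p := by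
      funext p; simp [add_mul]
    rw [this]; exact Submodule.add_mem _ ih₁ ih₂
  | smul a f₁ hf₁ ih =>
    have : (fun p => (a • f₁) p * g p) = a • fun p => f₁ p * g p := by
      funext p; simp [Pi.smul_apply, smul_eq_mul]; ring
    rw [this]; exact Submodule.smul_mem _ _ ih

abbrev sqX : Set (ℝ × ℝ) := Set.Icc ((0:ℝ), (0:ℝ)) ((1:ℝ), (1:ℝ))

lemma unitSq_subset_sqX : unitSq ⊆ sqX := by
  rintro p ⟨⟨hx0, hx1⟩, ⟨hy0, hy1⟩⟩
  constructor
  · exact ⟨hx0.le, hy0.le⟩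
  · exact ⟨hx1.le, hy1.le⟩

noncomputable def gX1 : C(sqX, ℝ) :=
  ⟨fun q => (q : ℝ × ℝ).1 ^ 2, by fun_prop⟩

noncomputable def gX2 : C(sqX, ℝ) :=
  ⟨fun q => Real.cos (Real.pi * (q : ℝ × ℝ).2), by fun_prop⟩

lemma sep_adjoin : (Algebra.adjoin ℝ {gX1, gX2} : Subalgebra ℝ C(sqX, ℝ)).SeparatesPoints := by
  intro q q' hne
  have h1 : gX1 ∈ Algebra.adjoin ℝ {gX1, gX2} :=
    Algebra.subset_adjoin (Set.mem_insert _ _)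
  have h2 : gX2 ∈ Algebra.adjoin ℝ {gX1, gX2} :=
    Algebra.subset_adjoin (Set.mem_insert_of_mem _ rfl)
  have hq2 := q.2
  have hq2' := q'.2
  simp only [Set.mem_Icc, Prod.le_def] at hq2 hq2'
  obtain ⟨⟨hq01, hq02⟩, hq11, hq12⟩ := hq2
  obtain ⟨⟨hq01', hq02'⟩, hq11', hq12'⟩ := hq2'
  by_cases hx : (q : ℝ × ℝ).1 = (q' : ℝ × ℝ).1
  · -- second coordinates differ
    have hy : (q : ℝ × ℝ).2 ≠ (q' : ℝ × ℝ).2 := by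
      intro hy
      exact hne (Subtype.ext (Prod.ext hx hy))
    refine ⟨gX2, ⟨gX2, h2, rfl⟩, ?_⟩
    simp only [gX2, ContinuousMap.coe_mk]
    intro hcos
    apply hy
    have hmem1 : Real.pi * (q : ℝ × ℝ).2 ∈ Set.Icc 0 Real.pi := by
      constructor
      · positivity
      · nlinarith [Real.pi_pos]
    have hmem2 : Real.pi * (q' : ℝ × ℝ).2 ∈ Set.Icc 0 Real.pi := by
      constructor
      · positivity
      · nlinarith [Real.pi_pos]
    have := Real.injOn_cos hmem1 hmem2 hcos
    exact mul_left_cancel₀ Real.pi_ne_zero this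
  · refine ⟨gX1, ⟨gX1, h1, rfl⟩, ?_⟩
    simp only [gX1, ContinuousMap.coe_mk]
    intro hsq
    apply hx
    rcases lt_trichotomy (q : ℝ × ℝ).1 (q' : ℝ × ℝ).1 with h | h | h
    · nlinarith
    · exact h
    · nlinarith

lemma adjoin_transfer {a : C(sqX, ℝ)} (ha : a ∈ Algebra.adjoin ℝ {gX1, gX2}) :
    ∃ f ∈ SpanS, ∀ q : sqX, a q = f (q : ℝ × ℝ) := by
  induction ha using Algebra.adjoin_induction with
  | mem x hx =>
    rcases hx with h | h
    · refine ⟨gen 1 0, gen_mem 1 0, fun q => ?_⟩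
      rw [h]
      simp [gX1, gen]
    · refine ⟨gen 0 1, gen_mem 0 1, fun q => ?_⟩
      rw [h]
      simp [gX2, gen]
  | algebraMap r =>
    refine ⟨r • gen 0 0, Submodule.smul_mem _ _ (gen_mem 0 0), fun q => ?_⟩
    simp [gen]
  | add x y hx hy ihx ihy =>
    obtain ⟨f, hf, hfe⟩ := ihx
    obtain ⟨g, hg, hge⟩ := ihy
    refine ⟨f + g, Submodule.add_mem _ hf hg, fun q => ?_⟩
    simp [hfe q, hge q]
  | mul x y hx hy ihx ihy =>
    obtain ⟨f, hf, hfe⟩ := ihx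
    obtain ⟨g, hg, hge⟩ := ihy
    refine ⟨fun p => f p * g p, mul_mem_spanS hf hg, fun q => ?_⟩
    simp [hfe q, hge q]

lemma approx_on_unitSq (g : ℝ × ℝ → ℝ) (hg : Continuous g) {ε : ℝ} (hε : 0 < ε) :
    ∃ f ∈ SpanS, ∀ p ∈ unitSq, |g p - f p| ≤ ε := by
  obtain ⟨⟨a, haA⟩, hab⟩ :=
    ContinuousMap.exists_mem_subalgebra_near_continuous_of_separatesPoints
      (Algebra.adjoin ℝ {gX1, gX2}) sep_adjoin (fun q : sqX => g q)
      (hg.comp continuous_subtype_val) ε hε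
  obtain ⟨f, hfS, hfe⟩ := adjoin_transfer haA
  refine ⟨f, hfS, fun p hp => ?_⟩
  have hq : p ∈ sqX := unitSq_subset_sqX hp
  have h1 := hab ⟨p, hq⟩
  rw [Real.norm_eq_abs] at h1
  rw [hfe ⟨p, hq⟩] at h1
  have h3 : |f p - g p| < ε := h1
  rw [abs_sub_comm]
  exact h3.le

lemma spanS_bounded_on_unitSq {f : ℝ × ℝ → ℝ} (hf : f ∈ SpanS) :
    Measurable f ∧ ∃ B : ℝ, 0 ≤ B ∧ ∀ p ∈ unitSq, |f p| ≤ B := by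
  induction hf using Submodule.span_induction with
  | mem f hfmem =>
    obtain ⟨j, k, rfl⟩ := hfmem
    refine ⟨by unfold gen; fun_prop, 1, zero_le_one, ?_⟩
    rintro p ⟨⟨hx0, hx1⟩, -⟩
    rw [gen, abs_mul]
    calc |p.1 ^ (2*j)| * |Real.cos ((k:ℝ) * Real.pi * p.2)| ≤ 1 * 1 := by
          apply mul_le_mul _ (Real.abs_cos_le_one _) (abs_nonneg _) zero_le_one
          rw [abs_pow, abs_of_pos hx0]
          exact pow_le_one₀ hx0.le hx1.le
      _ = 1 := mul_one 1
  | zero => exact ⟨measurable_zero, 0, le_refl 0, fun p _ => by simp⟩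
  | add f g hf hg ihf ihg =>
    obtain ⟨hmf, Bf, hBf0, hBf⟩ := ihf
    obtain ⟨hmg, Bg, hBg0, hBg⟩ := ihg
    refine ⟨hmf.add hmg, Bf + Bg, by linarith, fun p hp => ?_⟩
    calc |(f + g) p| ≤ |f p| + |g p| := abs_add_le _ _
      _ ≤ Bf + Bg := add_le_add (hBf p hp) (hBg p hp)
  | smul a f hf ihf =>
    obtain ⟨hmf, Bf, hBf0, hBf⟩ := ihf
    refine ⟨hmf.const_smul a, |a| * Bf, by positivity, fun p hp => ?_⟩
    rw [Pi.smul_apply, smul_eq_mul, abs_mul]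
    exact mul_le_mul_of_nonneg_left (hBf p hp) (abs_nonneg a)

lemma integral_spanS (w : ℝ × ℝ → ℝ) (hInt : Integrable w μ)
    (hcoef : ∀ (k : ℤ) (j : ℕ),
      (∫ p in unitSq, w p * p.1 ^ (2*j) * Real.cos ((k:ℝ) * Real.pi * p.2)) = 0)
    {f : ℝ × ℝ → ℝ} (hf : f ∈ SpanS) :
    Integrable (fun p => w p * f p) μ ∧ (∫ p, w p * f p ∂μ) = 0 := by
  have hint : ∀ {g : ℝ × ℝ → ℝ}, g ∈ SpanS → Integrable (fun p => w p * g p) μ := by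
    intro g hg
    obtain ⟨hmg, B, hB0, hB⟩ := spanS_bounded_on_unitSq hg
    refine Integrable.mono' (hInt.norm.mul_const B) ?_ ?_
    · exact hInt.1.mul hmg.aestronglyMeasurable
    · filter_upwards [ae_mem_unitSq] with p hp
      rw [Real.norm_eq_abs, abs_mul]
      exact mul_le_mul_of_nonneg_left (hB p hp) (abs_nonneg _)
  refine ⟨hint hf, ?_⟩
  induction hf using Submodule.span_induction with
  | mem f hfmem =>
    obtain ⟨j, k, rfl⟩ := hfmem
    rw [show (fun p => w p * gen j k p)
        = fun p => w p * p.1 ^ (2*j) * Real.cos ((k:ℝ) * Real.pi * p.2) from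
      funext fun p => by rw [gen]; ring]
    exact hcoef k j
  | zero => simp
  | add f g hfm hgm ihf ihg =>
    simp only [Pi.add_apply, mul_add]
    rw [integral_add (hint hfm) (hint hgm), ihf, ihg, add_zero]
  | smul a f hfm ihf =>
    have h2 : (∫ p, w p * (a • f) p ∂μ) = a * ∫ p, w p * f p ∂μ := by
      rw [show (fun p => w p * (a • f) p) = fun p => a * (w p * f p) from
        funext fun p => by simp [smul_eq_mul]; ring]
      exact integral_const_mul _ _
    rw [h2, ihf, mul_zero]

lemma w_ae_zero (w : ℝ × ℝ → ℝ) (hInt : Integrable w μ)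
    (hcoef : ∀ (k : ℤ) (j : ℕ),
      (∫ p in unitSq, w p * p.1 ^ (2*j) * Real.cos ((k:ℝ) * Real.pi * p.2)) = 0) :
    w =ᵐ[μ] 0 := by
  have hzero : ∀ g : ℝ × ℝ → ℝ, ContDiff ℝ (⊤ : ℕ∞) g → HasCompactSupport g →
      ∫ p, g p • w p ∂μ = 0 := by
    intro g hgc hgs
    have hgcont : Continuous g := hgc.continuous
    obtain ⟨Bg, hBg⟩ := hgs.exists_bound_of_continuous hgcont
    have hIg : Integrable (fun p => g p * w p) μ := by
      refine Integrable.mono' (hInt.norm.const_mul Bg) ?_ ?_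
      · exact hgcont.aestronglyMeasurable.mul hInt.1
      · refine Eventually.of_forall fun p => ?_
        rw [Real.norm_eq_abs, abs_mul]
        exact mul_le_mul_of_nonneg_right (hBg p) (abs_nonneg _)
    set W := ∫ p, ‖w p‖ ∂μ with hW
    have W0 : 0 ≤ W := integral_nonneg fun p => norm_nonneg _
    have key : ∀ ε : ℝ, 0 < ε → |∫ p, g p * w p ∂μ| ≤ ε * W := by
      intro ε hε
      obtain ⟨f, hfS, hfa⟩ := approx_on_unitSq g hgcont hε
      obtain ⟨hIf, hif0⟩ := integral_spanS w hInt hcoef hfS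
      have hIf' : Integrable (fun p => f p * w p) μ := by
        refine hIf.congr (Eventually.of_forall fun p => ?_)
        ring_nf
      have hsplit : (∫ p, g p * w p ∂μ)
          = ∫ p, (g p - f p) * w p ∂μ := by
        have : (fun p => (g p - f p) * w p)
            = fun p => g p * w p - f p * w p := by funext p; ring
        rw [this, integral_sub hIg hIf']
        have : (∫ p, f p * w p ∂μ) = 0 := by
          rw [show (fun p => f p * w p) = fun p => w p * f p from funext fun p => by ring]
          exact hif0
        rw [this, sub_zero]
      rw [hsplit]
      calc |∫ p, (g p - f p) * w p ∂μ|
          ≤ ∫ p, ε * ‖w p‖ ∂μ := by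
            rw [← Real.norm_eq_abs]
            refine norm_integral_le_of_norm_le (hInt.norm.const_mul ε) ?_
            filter_upwards [ae_mem_unitSq] with p hp
            rw [Real.norm_eq_abs, abs_mul, Real.norm_eq_abs]
            exact mul_le_mul_of_nonneg_right (hfa p hp) (abs_nonneg _)
        _ = ε * W := integral_const_mul _ _
    have hI0 : (∫ p, g p * w p ∂μ) = 0 := by
      by_contra habs
      have hpos : 0 < |∫ p, g p * w p ∂μ| := abs_pos.2 habs
      have hcase := key (|∫ p, g p * w p ∂μ| / (2 * (W + 1))) (by positivity)
      set A := |∫ p, g p * w p ∂μ| with hA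
      have hD : (0:ℝ) < 2 * (W + 1) := by linarith
      rw [div_mul_eq_mul_div, le_div_iff₀ hD] at hcase
      nlinarith [mul_nonneg hpos.le W0]
    simpa [smul_eq_mul] using hI0
  have := ae_eq_zero_of_integral_contDiff_smul_eq_zero (hInt.locallyIntegrable) hzero
  filter_upwards [this] with p hp using hp

lemma coefC_ofReal (w : ℝ × ℝ → ℝ) (k : ℤ) (m : ℕ) :
    coefC w k m = ((∫ p in unitSq, w p * p.1 ^ m * Real.cos ((k:ℝ) * Real.pi * p.2) : ℝ) : ℂ) := by
  rw [coefC]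
  have h : (fun p : ℝ × ℝ => (w p : ℂ) * (p.1 : ℂ) ^ m *
      Complex.cos ((k : ℂ) * (Real.pi : ℂ) * (p.2 : ℂ)))
      = fun p : ℝ × ℝ => ((w p * p.1 ^ m * Real.cos ((k:ℝ) * Real.pi * p.2) : ℝ) : ℂ) := by
    funext p
    push_cast [Complex.ofReal_cos]
    ring
  rw [h]
  exact integral_ofReal

/-- Lemma 2 (second part): if `w ∈ L²(Ω)` and `w ≢ 0`, then there exists an integer `n` such
that `limsup_{r → +∞} ln |G(w)(r, nπ)| / r ≥ −1`. -/
theorem stmt3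
    (w : ℝ × ℝ → ℝ)
    (hw : MemLp w 2 (MeasureTheory.volume.restrict unitSq))
    (hw0 : ¬ (w =ᵐ[MeasureTheory.volume.restrict unitSq] 0)) :
    ∃ n : ℤ, (-1 : ℝ) ≤
      Filter.limsup (fun r : ℝ => Real.log ‖Gfun w n (r : ℂ)‖ / r)
        Filter.atTop := by
  by_contra hcon
  push_neg at hcon
  have hInt : Integrable w μ := hw.integrable one_le_two
  have hdecay : ∀ n : ℤ, ∀ᶠ r : ℝ in atTop,
      ‖Gfun w n (r : ℂ)‖ ≤ Real.exp (-r) := by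
    intro n
    set f : ℝ → ℝ := fun r => Real.log ‖Gfun w n (r : ℂ)‖ / r with hf
    have hlim := hcon n
    by_cases hbdd : IsBoundedUnder (· ≤ ·) atTop f
    · have hev : ∀ᶠ r in atTop, f r < -1 :=
        Filter.eventually_lt_of_limsup_lt hlim hbdd
      filter_upwards [hev, eventually_gt_atTop (0:ℝ)] with r hr hr0
      have hlog : Real.log ‖Gfun w n (r : ℂ)‖ < -r := by
        have h1 := (div_lt_iff₀ hr0).1 hr
        linarith
      rcases eq_or_lt_of_le (norm_nonneg (Gfun w n (r : ℂ))) with h0 | h0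
      · rw [← h0]
        exact (Real.exp_pos _).le
      · have := Real.exp_log h0
        calc ‖Gfun w n (r : ℂ)‖
            = Real.exp (Real.log ‖Gfun w n (r : ℂ)‖) := this.symm
          _ ≤ Real.exp (-r) := Real.exp_le_exp.2 hlog.le
    · exfalso
      have hempty : {a : ℝ | ∀ᶠ r in atTop, f r ≤ a} = ∅ := by
        rw [Set.eq_empty_iff_forall_notMem]
        intro a ha
        exact hbdd ⟨a, by simpa [Filter.eventually_map] using ha⟩
      rw [Filter.limsup_eq, hempty, Real.sInf_empty] at hlim
      linarith
  have hGzero : ∀ n : ℤ, Gfun w n = 0 :=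
    fun n => Gfun_eq_zero_of_decay w n hInt (hdecay n)
  have hcoef : ∀ (k : ℤ) (j : ℕ),
      (∫ p in unitSq, w p * p.1 ^ (2*j) * Real.cos ((k:ℝ) * Real.pi * p.2)) = 0 := by
    intro k j
    have h := coefC_eq_zero w k hInt (hGzero k) (2*j) (even_two_mul j)
    rw [coefC_ofReal] at h
    exact_mod_cast h
  exact hw0 (w_ae_zero w hInt hcoef)
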